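/- Let α be a peak composition of n. The set RW_c(α) := {w_c(T) : T ∈ SPIT(α)} ⊆ S_n is a left weak Bruhat interval (i.e. RW_c(α) = [σ,ρ]_L for some σ ⪯_L ρ in S_n) if and only if the number of parts of α greater than 2 is at most 1. -/

import Mathlib

namespace PaperSPIT

/-- The `j`-th part (1-indexed) of a composition presented as a list. -/
def part (α : List ℕ) (j : ℕ) : ℕ := α.getD (j - 1) 0

/-- The largest part. -/
def maxPart (α : List ℕ) : ℕ := α.foldr max 0

/-- The composition diagram: boxes `(i, j)` (column `i`, row `j`), both 1-indexed,
rows numbered from bottom to top. -/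
def cd (α : List ℕ) : Finset (ℕ × ℕ) :=
  (Finset.Icc 1 (maxPart α) ×ˢ Finset.Icc 1 α.length).filter fun p => p.1 ≤ part α p.2

/-- `α` is a composition of `n`. -/
def IsComposition (n : ℕ) (α : List ℕ) : Prop :=
  (∀ a ∈ α, 0 < a) ∧ α.sum = n

/-- `α` is a peak composition of `n`: all parts except possibly the last are `> 1`. -/
def IsPeakComposition (n : ℕ) (α : List ℕ) : Prop :=
  IsComposition n α ∧ ∀ i, i + 1 < α.length → 1 < α.getD i 0

/-- A standard filling of `cd α`: a bijection from the boxes onto `{1, …, n}`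
(normalized to be `0` off the diagram). -/
def IsStandardFilling (α : List ℕ) (T : ℕ × ℕ → ℕ) : Prop :=
  Set.BijOn T (cd α : Set (ℕ × ℕ)) (Set.Icc 1 α.sum) ∧
  ∀ p : ℕ × ℕ, p ∉ cd α → T p = 0

def RowsIncrease (α : List ℕ) (T : ℕ × ℕ → ℕ) : Prop :=
  ∀ i j : ℕ, (i, j) ∈ cd α → (i + 1, j) ∈ cd α → T (i, j) < T (i + 1, j)

def RowsWeaklyIncrease (α : List ℕ) (T : ℕ × ℕ → ℕ) : Prop :=
  ∀ i j : ℕ, (i, j) ∈ cd α → (i + 1, j) ∈ cd α → T (i, j) ≤ T (i + 1, j)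

def FirstColIncreases (α : List ℕ) (T : ℕ × ℕ → ℕ) : Prop :=
  ∀ j : ℕ, (1, j) ∈ cd α → (1, j + 1) ∈ cd α → T (1, j) < T (1, j + 1)

/-- Standard immaculate tableau. -/
def IsSIT (α : List ℕ) (T : ℕ × ℕ → ℕ) : Prop :=
  IsStandardFilling α T ∧ RowsIncrease α T ∧ FirstColIncreases α T

/-- Peak-tableau condition: for every `1 ≤ k ≤ n` the boxes with entries `≤ k`
form the diagram of a peak composition. -/
def PeakCond (α : List ℕ) (T : ℕ × ℕ → ℕ) : Prop :=
  ∀ k : ℕ, 1 ≤ k → k ≤ α.sum → ∃ β : List ℕ,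
    IsPeakComposition k β ∧ (cd α).filter (fun p => T p ≤ k) = cd β

/-- Standard peak immaculate tableau. -/
def IsSPIT (α : List ℕ) (T : ℕ × ℕ → ℕ) : Prop := IsSIT α T ∧ PeakCond α T

def SPITset (α : List ℕ) : Set (ℕ × ℕ → ℕ) := {T | IsSPIT α T}

/-- The Young triple condition. -/
def YoungTriple (α : List ℕ) (T : ℕ × ℕ → ℕ) : Prop :=
  ∀ k i j : ℕ, i < j → (k, j) ∈ cd α → (k + 1, i) ∈ cd α → T (k, j) ≤ T (k + 1, i) →
    (k + 1, j) ∈ cd α ∧ T (k + 1, j) < T (k + 1, i)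

/-- Standard Young composition tableau. -/
def IsSYCT (α : List ℕ) (T : ℕ × ℕ → ℕ) : Prop :=
  IsStandardFilling α T ∧ RowsIncrease α T ∧ FirstColIncreases α T ∧ YoungTriple α T

def SYCTset (α : List ℕ) : Set (ℕ × ℕ → ℕ) := {T | IsSYCT α T}

/-- Standard peak Young composition tableau. -/
def IsSPYCT (α : List ℕ) (T : ℕ × ℕ → ℕ) : Prop := IsSYCT α T ∧ PeakCond α T

def SPYCTset (α : List ℕ) : Set (ℕ × ℕ → ℕ) := {T | IsSPYCT α T}

/-- Row reading word `w_r`: rows from top to bottom, each row left to right. -/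
def wR (α : List ℕ) (T : ℕ × ℕ → ℕ) : List ℕ :=
  ((List.range α.length).reverse.map fun j =>
    (List.range (part α (j + 1))).map fun i => T (i + 1, j + 1)).flatten

/-- The `i`-th column of a filling, read bottom to top. -/
def colList (α : List ℕ) (T : ℕ × ℕ → ℕ) (i : ℕ) : List ℕ :=
  ((List.range α.length).filter fun j => decide (i ≤ part α (j + 1))).map
    fun j => T (i, j + 1)

/-- Column reading word `w_c`: columns left to right, each column bottom to top. -/
def wC (α : List ℕ) (T : ℕ × ℕ → ℕ) : List ℕ :=
  ((List.range (maxPart α)).map fun i => colList α T (i + 1)).flatten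

/-- Young reading word `w_Y`: first column top to bottom, then subsequent columns
bottom to top, columns left to right. -/
def wY (α : List ℕ) (T : ℕ × ℕ → ℕ) : List ℕ :=
  (colList α T 1).reverse ++
    ((List.range (maxPart α - 1)).map fun i => colList α T (i + 2)).flatten

/-- Descent set of a word with distinct letters: `i` such that `i` and `i+1` occur
and `i` occurs to the right of `i+1`. -/
def DesWord (w : List ℕ) : Finset ℕ :=
  w.toFinset.filter fun i => (i + 1) ∈ w ∧ w.idxOf (i + 1) < w.idxOf i


/-- A word of length `n` with distinct letters `1,…,n`, identified with an element of `S_n`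
in one-line notation. -/
def IsPermWord (n : ℕ) (w : List ℕ) : Prop := w.Perm (List.range' 1 n)

/-- Inversions of a word (1-indexed positions): pairs `(i,j)` with `i < j` and the letter at
position `i` larger than the letter at position `j`. -/
def InvW (w : List ℕ) : Set (ℕ × ℕ) :=
  {q | 1 ≤ q.1 ∧ q.1 < q.2 ∧ q.2 ≤ w.length ∧ w.getD (q.2 - 1) 0 < w.getD (q.1 - 1) 0}

/-- The set of column reading words of SPITs of shape `α`. -/
def RWc (α : List ℕ) : Set (List ℕ) := {w | ∃ T ∈ SPITset α, w = wC α T}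

/-- The set of row reading words of SPITs of shape `α`. -/
def RWr (α : List ℕ) : Set (List ℕ) := {w | ∃ T ∈ SPITset α, w = wR α T}


/-! ### Infrastructure: the reading-order list of boxes -/

def colBoxes (α : List ℕ) (i : ℕ) : List (ℕ × ℕ) :=
  ((List.range α.length).filter fun j => decide (i ≤ part α (j + 1))).map fun j => (i, j + 1)

def boxesList (α : List ℕ) : List (ℕ × ℕ) :=
  ((List.range (maxPart α)).map fun i => colBoxes α (i + 1)).flatten

lemma colList_eq_map (α : List ℕ) (T : ℕ × ℕ → ℕ) (i : ℕ) :
    colList α T i = (colBoxes α i).map T := by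
  simp [colList, colBoxes, List.map_map, Function.comp]

lemma wC_eq_map (α : List ℕ) (T : ℕ × ℕ → ℕ) :
    wC α T = (boxesList α).map T := by
  simp only [wC, boxesList, List.map_flatten, List.map_map, colList_eq_map]
  rfl

lemma le_maxPart_of_mem {α : List ℕ} {a : ℕ} (h : a ∈ α) : a ≤ maxPart α := by
  induction α with
  | nil => simp at h
  | cons x l ih =>
    rcases List.mem_cons.mp h with h | h
    · subst h; exact le_max_left _ _
    · exact le_trans (ih h) (le_max_right _ _)

lemma part_le_maxPart {α : List ℕ} {j : ℕ} (h1 : 1 ≤ j) (h2 : j ≤ α.length) :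
    part α j ≤ maxPart α := by
  have hj : j - 1 < α.length := by omega
  have : part α j = α[j-1] := List.getD_eq_getElem α 0 hj
  rw [this]
  exact le_maxPart_of_mem (List.getElem_mem hj)

lemma mem_cd {α : List ℕ} {p : ℕ × ℕ} :
    p ∈ cd α ↔ 1 ≤ p.1 ∧ 1 ≤ p.2 ∧ p.2 ≤ α.length ∧ p.1 ≤ part α p.2 := by
  simp only [cd, Finset.mem_filter, Finset.mem_product, Finset.mem_Icc]
  constructor
  · rintro ⟨⟨⟨h1, h2⟩, h3, h4⟩, h5⟩; exact ⟨h1, h3, h4, h5⟩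
  · rintro ⟨h1, h3, h4, h5⟩
    exact ⟨⟨⟨h1, le_trans h5 (part_le_maxPart h3 h4)⟩, h3, h4⟩, h5⟩

lemma mem_colBoxes {α : List ℕ} {i : ℕ} {p : ℕ × ℕ} :
    p ∈ colBoxes α i ↔ p.1 = i ∧ 1 ≤ p.2 ∧ p.2 ≤ α.length ∧ i ≤ part α p.2 := by
  simp only [colBoxes, List.mem_map, List.mem_filter, List.mem_range, decide_eq_true_eq]
  constructor
  · rintro ⟨j, ⟨hj, hle⟩, rfl⟩
    exact ⟨rfl, by omega, by omega, hle⟩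
  · rintro ⟨h1, h2, h3, h4⟩
    exact ⟨p.2 - 1, ⟨by omega, by rw [show p.2 - 1 + 1 = p.2 by omega]; exact h4⟩,
      by rw [show p.2 - 1 + 1 = p.2 by omega, ← h1]⟩

lemma mem_boxesList {α : List ℕ} {p : ℕ × ℕ} :
    p ∈ boxesList α ↔ p ∈ cd α := by
  simp only [boxesList, List.mem_flatten, List.mem_map]
  rw [mem_cd]
  constructor
  · rintro ⟨l, ⟨i, hi, rfl⟩, hp⟩
    rw [List.mem_range] at hi
    rw [mem_colBoxes] at hp
    exact ⟨by omega, hp.2.1, hp.2.2.1, by rw [hp.1]; exact hp.2.2.2⟩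
  · rintro ⟨h1, h2, h3, h4⟩
    refine ⟨colBoxes α p.1, ⟨p.1 - 1, ?_, by rw [show p.1 - 1 + 1 = p.1 by omega]⟩, ?_⟩
    · rw [List.mem_range]
      have := le_trans h4 (part_le_maxPart h2 h3)
      omega
    · rw [mem_colBoxes]; exact ⟨rfl, h2, h3, h4⟩

/-- Colexicographic-type strict order on boxes: column first, then row. -/
def Colex (p q : ℕ × ℕ) : Prop := p.1 < q.1 ∨ (p.1 = q.1 ∧ p.2 < q.2)

lemma colex_irrefl (p : ℕ × ℕ) : ¬ Colex p p := by simp [Colex]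

lemma colex_asymm {p q : ℕ × ℕ} (h : Colex p q) : ¬ Colex q p := by
  rcases h with h | ⟨h1, h2⟩ <;> (intro h'; rcases h' with h' | ⟨h1', h2'⟩ <;> omega)

lemma pairwise_boxes (α : List ℕ) : (boxesList α).Pairwise Colex := by
  rw [boxesList, List.pairwise_flatten]
  constructor
  · intro l hl
    rw [List.mem_map] at hl
    obtain ⟨i, hi, rfl⟩ := hl
    rw [colBoxes]
    rw [List.pairwise_map]
    have : List.Pairwise (· < ·) ((List.range α.length).filter
        fun j => decide (i + 1 ≤ part α (j + 1))) :=
      List.Pairwise.filter _ (List.pairwise_lt_range)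
    exact this.imp fun h => Or.inr ⟨rfl, by omega⟩
  · rw [List.pairwise_map]
    have : List.Pairwise (· < ·) (List.range (maxPart α)) := List.pairwise_lt_range
    refine this.imp ?_
    intro a b hab x hx y hy
    rw [mem_colBoxes] at hx hy
    exact Or.inl (by omega)

lemma nodup_boxes (α : List ℕ) : (boxesList α).Nodup :=
  (pairwise_boxes α).imp fun h => by
    intro he; subst he; exact colex_irrefl _ h

lemma colex_of_lt {α : List ℕ} {k l : ℕ} (hk : k < (boxesList α).length)
    (hl : l < (boxesList α).length) (hkl : k < l) :
    Colex (boxesList α)[k] (boxesList α)[l] := by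
  have := List.pairwise_iff_get.mp (pairwise_boxes α) ⟨k, hk⟩ ⟨l, hl⟩ hkl
  simpa using this

lemma lt_of_colex {α : List ℕ} {k l : ℕ} (hk : k < (boxesList α).length)
    (hl : l < (boxesList α).length)
    (h : Colex (boxesList α)[k] (boxesList α)[l]) : k < l := by
  rcases lt_trichotomy k l with h' | h' | h'
  · exact h'
  · exfalso; subst h'; exact colex_irrefl _ h
  · exact absurd h (colex_asymm (colex_of_lt hl hk h'))


/-! ### Counting lemmas -/

lemma countP_range (L : ℕ) (P : ℕ → Bool) :
    (List.range L).countP P = ∑ j ∈ Finset.range L, if P j = true then 1 else 0 := by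
  induction L with
  | zero => simp
  | succ L ih =>
    rw [List.range_succ, List.countP_append, ih, Finset.sum_range_succ]
    simp [List.countP_cons]

lemma sum_map_range (L : ℕ) (f : ℕ → ℕ) :
    ((List.range L).map f).sum = ∑ i ∈ Finset.range L, f i := by
  induction L with
  | zero => simp
  | succ L ih => rw [List.range_succ, List.map_append, List.sum_append, Finset.sum_range_succ, ih]; simp

lemma sum_range_getD (l : List ℕ) (f : ℕ → ℕ) :
    ∑ j ∈ Finset.range l.length, f (l.getD j 0) = (l.map f).sum := by
  induction l with
  | nil => simp
  | cons x xs ih =>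
    rw [List.length_cons, Finset.sum_range_succ']
    simp only [List.getD_cons_succ, List.getD_cons_zero, List.map_cons, List.sum_cons, ih]
    omega

lemma countP_boxes (α : List ℕ) (Q : ℕ × ℕ → Bool) :
    (boxesList α).countP Q =
      ∑ i ∈ Finset.range (maxPart α), ∑ j ∈ Finset.range α.length,
        if (i + 1 ≤ part α (j + 1) ∧ Q (i + 1, j + 1) = true) then 1 else 0 := by
  rw [boxesList, List.countP_flatten, List.map_map]
  rw [show (List.countP Q ∘ fun i => colBoxes α (i + 1)) = fun i =>
      (List.range α.length).countP
        (fun j => decide (i + 1 ≤ part α (j + 1)) && Q (i + 1, j + 1)) from ?_]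
  · rw [sum_map_range]
    refine Finset.sum_congr rfl fun i _ => ?_
    rw [countP_range]
    refine Finset.sum_congr rfl fun j _ => ?_
    congr 1
    simp
  · funext i
    simp only [Function.comp, colBoxes, List.countP_map, List.countP_filter]
    congr 1
    funext j
    rw [Bool.and_comm]

lemma sum_ite_le (m A : ℕ) (hA : A ≤ m) :
    (∑ i ∈ Finset.range m, if i + 1 ≤ A then 1 else 0) = A := by
  rw [← Finset.card_filter]
  rw [show (Finset.range m).filter (fun i => i + 1 ≤ A) = Finset.range A from ?_]
  · exact Finset.card_range A
  · ext i; simp only [Finset.mem_filter, Finset.mem_range]; omega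

lemma length_boxes (α : List ℕ) : (boxesList α).length = α.sum := by
  have h := countP_boxes α (fun _ => true)
  simp only [and_true] at h
  have h0 : (boxesList α).countP (fun _ => true) = (boxesList α).length := by
    simp
  rw [← h0, h, Finset.sum_comm]
  have : ∀ j ∈ Finset.range α.length,
      (∑ i ∈ Finset.range (maxPart α), if i + 1 ≤ part α (j + 1) then 1 else 0)
        = part α (j + 1) := by
    intro j hj
    rw [Finset.mem_range] at hj
    exact sum_ite_le _ _ (part_le_maxPart (by omega) (by omega))
  rw [Finset.sum_congr rfl this]
  have := sum_range_getD α id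
  simp only [List.map_id, id] at this
  rw [← this]
  exact Finset.sum_congr rfl fun j _ => by simp [part]

lemma countP_spine (α : List ℕ) :
    (boxesList α).countP (fun p => decide (p.1 ≤ 2)) = (α.map (fun a => min a 2)).sum := by
  rw [countP_boxes, Finset.sum_comm]
  have : ∀ j ∈ Finset.range α.length,
      (∑ i ∈ Finset.range (maxPart α),
        if (i + 1 ≤ part α (j + 1) ∧ decide ((i+1, j+1).1 ≤ 2) = true) then 1 else 0)
        = min (part α (j + 1)) 2 := by
    intro j hj
    rw [Finset.mem_range] at hj
    have h1 : ∀ i, (i + 1 ≤ part α (j + 1) ∧ decide ((i+1, j+1).1 ≤ 2) = true)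
        ↔ i + 1 ≤ min (part α (j + 1)) 2 := by
      intro i; simp only [decide_eq_true_eq]; omega
    rw [Finset.sum_congr rfl fun i _ => if_congr (h1 i) rfl rfl]
    refine sum_ite_le _ _ (le_trans (min_le_left _ _) (part_le_maxPart (by omega) (by omega)))
  rw [Finset.sum_congr rfl this]
  rw [← sum_range_getD α (fun a => min a 2)]
  exact Finset.sum_congr rfl fun j _ => by simp [part]

lemma countP_tailrow (α : List ℕ) (r0 : ℕ) (hr0 : 1 ≤ r0) :
    (boxesList α).countP (fun p => decide (3 ≤ p.1 ∧ p.2 = r0)) = part α r0 - 2 := by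
  rw [countP_boxes, Finset.sum_comm]
  have key : ∀ j ∈ Finset.range α.length,
      (∑ i ∈ Finset.range (maxPart α),
        if (i + 1 ≤ part α (j + 1) ∧ decide (3 ≤ (i+1, j+1).1 ∧ (i+1,j+1).2 = r0) = true) then 1 else 0)
        = if j + 1 = r0 then part α (j + 1) - 2 else 0 := by
    intro j hj
    rw [Finset.mem_range] at hj
    by_cases hc : j + 1 = r0
    · rw [if_pos hc]
      have h1 : ∀ i, (i + 1 ≤ part α (j + 1) ∧ decide (3 ≤ (i+1, j+1).1 ∧ (i+1,j+1).2 = r0) = true)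
          ↔ (2 ≤ i ∧ i < part α (j + 1)) := by
        intro i; simp only [decide_eq_true_eq]; omega
      rw [Finset.sum_congr rfl fun i _ => if_congr (h1 i) rfl rfl, ← Finset.card_filter]
      rw [show (Finset.range (maxPart α)).filter (fun i => 2 ≤ i ∧ i < part α (j + 1))
          = Finset.Ico 2 (part α (j + 1)) from ?_]
      · rw [Nat.card_Ico]
      · ext i
        simp only [Finset.mem_filter, Finset.mem_range, Finset.mem_Ico]
        have := part_le_maxPart (α := α) (j := j + 1) (by omega) (by omega)
        omega
    · rw [if_neg hc]
      refine Finset.sum_eq_zero fun i _ => ?_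
      rw [if_neg]; simp only [decide_eq_true_eq]; omega
  rw [Finset.sum_congr rfl key]
  by_cases hr : r0 ≤ α.length
  · rw [Finset.sum_eq_single (r0 - 1)]
    · rw [show r0 - 1 + 1 = r0 by omega, if_pos rfl]
    · intro b _ hb
      have hne : ¬(b + 1 = r0) := by omega
      rw [if_neg hne]
    · intro hb; exfalso; rw [Finset.mem_range] at hb; omega
  · rw [Finset.sum_eq_zero]
    · have : part α r0 = 0 := by
        rw [part, List.getD_eq_default]; omega
      omega
    · intro j hj; rw [Finset.mem_range] at hj; rw [if_neg]; omega

/-- Spine size. -/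
def sp (α : List ℕ) : ℕ := (α.map (fun a => min a 2)).sum


/-! ### Basic facts about SITs and compositions -/

lemma part_pos {n : ℕ} {α : List ℕ} (hα : IsPeakComposition n α) {j : ℕ}
    (h1 : 1 ≤ j) (h2 : j ≤ α.length) : 1 ≤ part α j := by
  have hj : j - 1 < α.length := by omega
  have : part α j = α[j-1] := List.getD_eq_getElem α 0 hj
  rw [this]
  exact hα.1.1 _ (List.getElem_mem hj)

lemma part_ge_two {n : ℕ} {α : List ℕ} (hα : IsPeakComposition n α) {j : ℕ}
    (h1 : 1 ≤ j) (h2 : j + 1 ≤ α.length) : 2 ≤ part α j := by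
  have hj : j - 1 < α.length := by omega
  have : part α j = α.getD (j-1) 0 := rfl
  rw [this]
  have := hα.2 (j - 1) (by omega)
  omega

lemma cd_closed_left {α : List ℕ} {i i' j : ℕ} (h : (i', j) ∈ cd α)
    (h1 : 1 ≤ i) (h2 : i ≤ i') : (i, j) ∈ cd α := by
  rw [mem_cd] at h ⊢
  simp only at h ⊢
  omega

lemma row_mono {α : List ℕ} {T : ℕ × ℕ → ℕ} (hR : RowsIncrease α T)
    {i i' j : ℕ} (h1 : 1 ≤ i) (h2 : i < i') (h3 : (i', j) ∈ cd α) :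
    T (i, j) < T (i', j) := by
  induction i' with
  | zero => omega
  | succ m ih =>
    have hm : (m, j) ∈ cd α ∨ i = m := by
      rcases Nat.lt_or_ge i m with h | h
      · exact Or.inl (cd_closed_left h3 (by omega) (by omega))
      · right; omega
    rcases Nat.lt_or_ge i m with h | h
    · have hmcd : (m, j) ∈ cd α := cd_closed_left h3 (by omega) (by omega)
      exact lt_trans (ih h hmcd) (hR m j hmcd h3)
    · have : i = m := by omega
      subst this
      exact hR i j (cd_closed_left h3 (by omega) (by omega)) h3

lemma T_mem_Icc {α : List ℕ} {T : ℕ × ℕ → ℕ} (hT : IsStandardFilling α T)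
    {p : ℕ × ℕ} (hp : p ∈ cd α) : 1 ≤ T p ∧ T p ≤ α.sum := by
  have := hT.1.1 hp
  exact this

lemma T_injOn {α : List ℕ} {T : ℕ × ℕ → ℕ} (hT : IsStandardFilling α T) :
    Set.InjOn T (cd α : Set (ℕ × ℕ)) := hT.1.2.1

/-- The set of values a standard filling takes on the boxes, as a list, is a
permutation of `1, …, n`. -/
lemma wC_permWord {α : List ℕ} {T : ℕ × ℕ → ℕ} (hT : IsStandardFilling α T) :
    IsPermWord α.sum (wC α T) := by
  rw [IsPermWord, wC_eq_map]
  have hnd : ((boxesList α).map T).Nodup := by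
    refine List.Nodup.map_on ?_ (nodup_boxes α)
    intro x hx y hy hxy
    exact T_injOn hT (by rw [Finset.mem_coe, ← mem_boxesList]; exact hx)
      (by rw [Finset.mem_coe, ← mem_boxesList]; exact hy) hxy
  refine List.perm_of_nodup_nodup_toFinset_eq hnd (List.nodup_range') ?_
  ext x
  simp only [List.mem_toFinset, List.mem_map, List.mem_range']
  constructor
  · rintro ⟨p, hp, rfl⟩
    rw [mem_boxesList] at hp
    have := T_mem_Icc hT hp
    exact ⟨T p - 1, by omega, by omega⟩
  · rintro ⟨i, hi, rfl⟩
    have : (1 + 1 * i) ∈ Set.Icc 1 α.sum := by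
      simp only [Set.mem_Icc]; omega
    obtain ⟨p, hp, hpv⟩ := hT.1.2.2 this
    exact ⟨p, by rw [mem_boxesList]; exact hp, hpv⟩

lemma countP_le_range' (n k : ℕ) (hk : k ≤ n) :
    (List.range' 1 n).countP (fun x => decide (x ≤ k)) = k := by
  induction n with
  | zero =>
    have : k = 0 := by omega
    subst this
    simp
  | succ m ih =>
    rw [List.range'_concat, List.countP_append]
    rcases Nat.lt_or_ge m k with h | h
    · have hk' : k = m + 1 := by omega
      subst hk'
      have h1 : (List.range' 1 m).countP (fun x => decide (x ≤ m + 1)) = m := by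
        rw [List.countP_eq_length.mpr]
        · exact List.length_range'
        · intro a ha
          rw [List.mem_range'] at ha
          simp only [decide_eq_true_eq]
          omega
      have hle : (1 + 1 * m : ℕ) ≤ m + 1 := by omega
      rw [h1]
      simp [List.countP_cons, hle]
      omega
    · rw [ih h]
      have hn : ¬ ((1 + 1 * m : ℕ) ≤ k) := by omega
      simp [List.countP_cons, hn]
      omega

/-- Counting values `≤ k` of a standard filling over the boxes gives `k`. -/
lemma countP_boxes_le {α : List ℕ} {T : ℕ × ℕ → ℕ} (hT : IsStandardFilling α T)
    {k : ℕ} (hk : k ≤ α.sum) :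
    (boxesList α).countP (fun p => decide (T p ≤ k)) = k := by
  have h1 : (boxesList α).countP (fun p => decide (T p ≤ k))
      = ((boxesList α).map T).countP (fun x => decide (x ≤ k)) := by
    rw [List.countP_map]; rfl
  have h2 := List.Perm.countP_eq (fun x => decide (x ≤ k)) (wC_permWord hT)
  rw [wC_eq_map] at h2
  rw [h1, h2]
  exact countP_le_range' _ _ hk

/-! ### Pillar I: characterization of the peak condition -/

lemma filter_range_downward (L : ℕ) (P : ℕ → Bool)
    (hdc : ∀ i j, i ≤ j → j < L → P j = true → P i = true) :
    (List.range L).filter P = List.range (((List.range L).filter P).length) := by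
  induction L with
  | zero => simp
  | succ L ih =>
    rw [List.range_succ, List.filter_append]
    cases hPL : P L with
    | false =>
      simp only [hPL, List.filter_cons, List.filter_nil, Bool.false_eq_true, if_false,
        List.append_nil]
      refine ih ?_
      intro i j hij hj hPj
      exact hdc i j hij (by omega) hPj
    | true =>
      have hall : ∀ a ∈ List.range L, P a = true := by
        intro a ha
        rw [List.mem_range] at ha
        exact hdc a L (by omega) (by omega) hPL
      rw [List.filter_eq_self.mpr hall]
      simp only [hPL, List.filter_cons, List.filter_nil, if_pos rfl]
      rw [List.length_append, List.length_range]
      simp [List.range_succ]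

lemma mem_filter_range_downward {L : ℕ} {P : ℕ → Bool}
    (hdc : ∀ i j, i ≤ j → j < L → P j = true → P i = true) (i : ℕ) :
    (i < ((List.range L).filter P).length) ↔ (i < L ∧ P i = true) := by
  constructor
  · intro h
    have : i ∈ List.range (((List.range L).filter P).length) := by
      rw [List.mem_range]; exact h
    rw [← filter_range_downward L P hdc] at this
    rw [List.mem_filter, List.mem_range] at this
    exact this
  · intro ⟨h1, h2⟩
    have : i ∈ (List.range L).filter P := by
      rw [List.mem_filter, List.mem_range]; exact ⟨h1, h2⟩
    rw [filter_range_downward L P hdc, List.mem_range] at this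
    exact this


lemma takeWhile_boundary {l : List ℕ} {P : ℕ → Bool} (h : (l.takeWhile P).length < l.length) :
    P (l.getD (l.takeWhile P).length 0) = false := by
  induction l with
  | nil => simp at h
  | cons x xs ih =>
    cases hPx : P x with
    | false => simp [List.takeWhile_cons, hPx]
    | true =>
      rw [List.takeWhile_cons, hPx] at h ⊢
      simp only [List.length_cons, List.getD_cons_succ]
      exact ih (by simpa using h)

/-- **Pillar I**: given a standard filling with increasing rows (on a peak composition),
the peak condition is equivalent to the chain inequalities `T(2,j) < T(1,j+1)`. -/
lemma peakCond_iff {n : ℕ} {α : List ℕ} (hα : IsPeakComposition n α) {T : ℕ × ℕ → ℕ}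
    (hSF : IsStandardFilling α T) (hR : RowsIncrease α T) :
    PeakCond α T ↔ ∀ j, 1 ≤ j → j + 1 ≤ α.length → T (2, j) < T (1, j + 1) := by
  constructor
  · intro hP j hj1 hj2
    have hb2 : (2, j) ∈ cd α := mem_cd.mpr ⟨by omega, by omega, by omega,
      part_ge_two hα hj1 hj2⟩
    have hb1 : (1, j + 1) ∈ cd α := mem_cd.mpr ⟨le_refl 1, by omega, by omega,
      part_pos hα (by omega) (by omega)⟩
    have hk := T_mem_Icc hSF hb1
    obtain ⟨β, hβ, hcd⟩ := hP (T (1, j + 1)) hk.1 hk.2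
    have h1f : (1, j + 1) ∈ (cd α).filter (fun p => T p ≤ T (1, j + 1)) :=
      Finset.mem_filter.mpr ⟨hb1, le_refl _⟩
    rw [hcd, mem_cd] at h1f
    have hlen : j + 1 ≤ β.length := h1f.2.2.1
    have hpart : 1 < β.getD (j - 1) 0 := hβ.2 (j - 1) (by omega)
    have hb2β : (2, j) ∈ cd β := mem_cd.mpr ⟨by omega, by omega, by omega, by
      show 2 ≤ part β j
      rw [part]; omega⟩
    rw [← hcd] at hb2β
    have hle := (Finset.mem_filter.mp hb2β).2
    have hne : T (2, j) ≠ T (1, j + 1) := by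
      intro he
      have := T_injOn hSF (by exact_mod_cast hb2) (by exact_mod_cast hb1) he
      simp at this
    omega
  · intro hch k hk1 hk2
    set cnt : ℕ → ℕ := fun j =>
      ((List.range (part α (j + 1))).filter (fun i => decide (T (i + 1, j + 1) ≤ k))).length
      with hcntdef
    set cnts : List ℕ := (List.range α.length).map cnt with hcntsdef
    set β : List ℕ := cnts.takeWhile (fun c => decide (0 < c)) with hβdef
    have hmemcnt : ∀ j, j < α.length → ∀ i, (i < cnt j ↔
        (i < part α (j + 1) ∧ T (i + 1, j + 1) ≤ k)) := by
      intro j hj i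
      have hdc : ∀ i i', i ≤ i' → i' < part α (j + 1) →
          (decide (T (i' + 1, j + 1) ≤ k)) = true → (decide (T (i + 1, j + 1) ≤ k)) = true := by
        intro i i' hii hi' hTi'
        simp only [decide_eq_true_eq] at hTi' ⊢
        rcases Nat.lt_or_ge i i' with h | h
        · have hcd' : (i' + 1, j + 1) ∈ cd α := mem_cd.mpr ⟨by omega, by omega, by omega,
            by show i' + 1 ≤ part α (j + 1); omega⟩
          have := row_mono hR (i := i + 1) (i' := i' + 1) (by omega) (by omega) hcd'
          omega
        · have : i = i' := by omega
          subst this; exact hTi'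
      have := mem_filter_range_downward (L := part α (j + 1))
        (P := fun i => decide (T (i + 1, j + 1) ≤ k)) hdc i
      rw [hcntdef]
      simp only [decide_eq_true_eq] at this
      exact this
    have hLk : β.length ≤ α.length := by
      have h1 : β.length ≤ cnts.length := (List.takeWhile_prefix _).length_le
      rw [hcntsdef] at h1
      simpa using h1
    have hβget : ∀ j, j < β.length → β.getD j 0 = cnt j := by
      intro j hj
      have hpre : β <+: cnts := List.takeWhile_prefix _
      rw [List.getD_eq_getElem _ _ hj, hpre.getElem hj]
      simp [hcntsdef]
    have hβpos : ∀ j, j < β.length → 0 < cnt j := by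
      intro j hj
      have hmem : β.getD j 0 ∈ β := by
        rw [List.getD_eq_getElem _ _ hj]
        exact List.getElem_mem hj
      have := List.mem_takeWhile_imp (by rw [← hβdef]; exact hmem)
      rw [hβget j hj] at this
      simpa using this
    have hstep : ∀ j, j + 1 < α.length → cnt j = 0 → cnt (j + 1) = 0 := by
      intro j hj hc0
      by_contra hne
      have hpos : 0 < cnt (j + 1) := by omega
      rw [hmemcnt (j + 1) (by omega) 0] at hpos
      have hT12 : T (1, j + 1 + 1) ≤ k := hpos.2
      have hcd2 : (2, j + 1) ∈ cd α := mem_cd.mpr ⟨by omega, by omega, by omega,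
        part_ge_two hα (by omega) (by omega)⟩
      have hrow : T (1, j + 1) < T (2, j + 1) :=
        row_mono hR (by omega) (by omega) hcd2
      have hchain := hch (j + 1) (by omega) (by omega)
      have h0 : 0 < cnt j := by
        rw [hmemcnt j (by omega) 0]
        refine ⟨part_pos hα (by omega) (by omega), ?_⟩
        show T (1, j + 1) ≤ k
        omega
      omega
    have hzero : ∀ j, β.length ≤ j → j < α.length → cnt j = 0 := by
      have hfirst : β.length < α.length → cnt β.length = 0 := by
        intro h
        have hb := takeWhile_boundary (l := cnts) (P := fun c => decide (0 < c))
          (by rw [hcntsdef]; simpa using h)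
        rw [← hβdef] at hb
        have : cnts.getD β.length 0 = cnt β.length := by
          rw [List.getD_eq_getElem _ _ (show β.length < cnts.length by simp [hcntsdef]; omega)]
          simp [hcntsdef]
        rw [this] at hb
        simpa using hb
      intro j hj1 hj2
      induction j with
      | zero =>
        have : β.length = 0 := by omega
        exact this ▸ hfirst (by omega)
      | succ m ih =>
        rcases Nat.lt_or_ge m β.length with h | h
        · have : β.length = m + 1 := by omega
          exact this ▸ hfirst (by omega)
        · exact hstep m (by omega) (ih h (by omega))
    refine ⟨β, ⟨⟨?_, ?_⟩, ?_⟩, ?_⟩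
    · -- positivity
      intro a ha
      have := List.mem_takeWhile_imp (by rw [← hβdef]; exact ha)
      simpa using this
    · -- sum = k
      have hcnts_sum : cnts.sum = k := by
        rw [hcntsdef, sum_map_range]
        have hterm : ∀ j ∈ Finset.range α.length, cnt j =
            ∑ i ∈ Finset.range (maxPart α),
              if (i + 1 ≤ part α (j + 1) ∧ (fun p => decide (T p ≤ k)) (i + 1, j + 1) = true)
              then 1 else 0 := by
          intro j hj
          rw [Finset.mem_range] at hj
          simp only [hcntdef]
          rw [← List.countP_eq_length_filter, countP_range]
          simp only [decide_eq_true_eq]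
          have e1 : ∀ i ∈ Finset.range (part α (j + 1)),
              (if T (i + 1, j + 1) ≤ k then 1 else 0)
                = (if (i + 1 ≤ part α (j + 1) ∧ T (i + 1, j + 1) ≤ k) then (1:ℕ) else 0) := by
            intro i hi
            rw [Finset.mem_range] at hi
            congr 1
            simp only [eq_iff_iff]
            constructor
            · intro h; exact ⟨by omega, h⟩
            · intro h; exact h.2
          rw [Finset.sum_congr rfl e1]
          refine Finset.sum_subset (Finset.range_subset_range.mpr
            (part_le_maxPart (α := α) (j := j + 1) (by omega) (by omega))) ?_
          intro i hi hni
          rw [Finset.mem_range] at hi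
          rw [Finset.mem_range] at hni
          rw [if_neg]
          intro hcon
          omega
        rw [Finset.sum_congr rfl hterm, ← Finset.sum_comm]
        rw [← countP_boxes α (fun p => decide (T p ≤ k))]
        exact countP_boxes_le hSF hk2
      have e2 : β ++ cnts.dropWhile (fun c => decide (0 < c)) = cnts := by
        rw [hβdef]
        exact List.takeWhile_append_dropWhile
      have hsplit : β.sum + (cnts.dropWhile (fun c => decide (0 < c))).sum = k := by
        rw [← List.sum_append, e2, hcnts_sum]
      have hdrop : (cnts.dropWhile (fun c => decide (0 < c))).sum = 0 := by
        refine List.sum_eq_zero fun x hx => ?_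
        have hdw : cnts.dropWhile (fun c => decide (0 < c)) = cnts.drop β.length := by
          have h3 := congrArg (List.drop β.length) e2
          rw [List.drop_left] at h3
          exact h3
        rw [hdw] at hx
        rw [List.mem_iff_getElem] at hx
        obtain ⟨m, hm, hxm⟩ := hx
        rw [List.getElem_drop] at hxm
        have hlt : β.length + m < α.length := by
          have h4 := hm
          rw [List.length_drop] at h4
          have hc : cnts.length = α.length := by simp [hcntsdef]
          omega
        have : cnts[β.length + m]'(by simp [hcntsdef]; omega) = cnt (β.length + m) := by
          simp [hcntsdef]
        rw [this] at hxm
        rw [← hxm]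
        exact hzero _ (by omega) hlt
      omega
    · -- peak condition for β
      intro i hi
      have hgi : β.getD i 0 = cnt i := hβget i (by omega)
      have hpos1 : 0 < cnt (i + 1) := hβpos (i + 1) hi
      rw [hmemcnt (i + 1) (by omega) 0] at hpos1
      have hT12 : T (1, i + 1 + 1) ≤ k := hpos1.2
      have hchain := hch (i + 1) (by omega) (by
        have : i + 1 < β.length := hi
        omega)
      have h2 : 1 < cnt i := by
        rw [hmemcnt i (by omega) 1]
        refine ⟨part_ge_two hα (by omega) (by omega), ?_⟩
        show T (2, i + 1) ≤ k
        omega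
      omega
    · -- cd equality
      ext p
      obtain ⟨i, j⟩ := p
      rw [Finset.mem_filter, mem_cd, mem_cd]
      simp only
      constructor
      · rintro ⟨⟨hi1, hj1, hj2, hip⟩, hTk⟩
        have hjm1 : j - 1 + 1 = j := by omega
        have hcm : i - 1 < cnt (j - 1) := by
          rw [hmemcnt (j - 1) (by omega), hjm1]
          constructor
          · omega
          · rw [show i - 1 + 1 = i by omega]
            exact hTk
        have hjβ : j - 1 < β.length := by
          by_contra hcon
          have := hzero (j - 1) (by omega) (by omega)
          omega
        refine ⟨hi1, hj1, by omega, ?_⟩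
        show i ≤ part β j
        rw [part, hβget (j - 1) hjβ]
        omega
      · rintro ⟨hi1, hj1, hj2, hip⟩
        rw [part, hβget (j - 1) (by omega)] at hip
        have hjm1 : j - 1 + 1 = j := by omega
        have := hmemcnt (j - 1) (by omega) (i - 1)
        rw [hjm1] at this
        rw [show i - 1 + 1 = i by omega] at this
        have h2 := this.mp (by omega)
        exact ⟨⟨hi1, hj1, by omega, by omega⟩, h2.2⟩

lemma firstCol_of_chain {n : ℕ} {α : List ℕ} (hα : IsPeakComposition n α) {T : ℕ × ℕ → ℕ}
    (hR : RowsIncrease α T)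
    (hch : ∀ j, 1 ≤ j → j + 1 ≤ α.length → T (2, j) < T (1, j + 1)) :
    FirstColIncreases α T := by
  intro j h1 h2
  rw [mem_cd] at h1 h2
  simp only at h1 h2
  have hcd2 : (2, j) ∈ cd α := mem_cd.mpr ⟨by omega, by omega, by omega,
    part_ge_two hα (by omega) (by omega)⟩
  have := row_mono hR (i := 1) (i' := 2) (by omega) (by omega) hcd2
  have := hch j (by omega) (by omega)
  omega

/-- The SPIT characterization. -/
lemma isSPIT_iff {n : ℕ} {α : List ℕ} (hα : IsPeakComposition n α) (T : ℕ × ℕ → ℕ) :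
    IsSPIT α T ↔ IsStandardFilling α T ∧ RowsIncrease α T ∧
      (∀ j, 1 ≤ j → j + 1 ≤ α.length → T (2, j) < T (1, j + 1)) := by
  constructor
  · rintro ⟨⟨hSF, hR, hFC⟩, hP⟩
    exact ⟨hSF, hR, (peakCond_iff hα hSF hR).mp hP⟩
  · rintro ⟨hSF, hR, hch⟩
    exact ⟨⟨hSF, hR, firstCol_of_chain hα hR hch⟩,
      (peakCond_iff hα hSF hR).mpr hch⟩

/-- Chain monotonicity along the spine. -/
lemma spine_mono {n : ℕ} {α : List ℕ} (hα : IsPeakComposition n α) {T : ℕ × ℕ → ℕ}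
    (hR : RowsIncrease α T)
    (hch : ∀ j, 1 ≤ j → j + 1 ≤ α.length → T (2, j) < T (1, j + 1))
    {p q : ℕ × ℕ} (hp : p ∈ cd α) (hq : q ∈ cd α) (hp2 : p.1 ≤ 2) (hq2 : q.1 ≤ 2)
    (hc : 2 * (p.2 - 1) + p.1 < 2 * (q.2 - 1) + q.1) : T p < T q := by
  obtain ⟨i, j⟩ := p
  obtain ⟨i', j'⟩ := q
  simp only at hp2 hq2 hc ⊢
  have hpm := mem_cd.mp hp
  have hqm := mem_cd.mp hq
  simp only at hpm hqm
  rcases Nat.eq_or_lt_of_le (show j ≤ j' by omega) with he | hlt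
  · subst he
    exact row_mono hR (by omega) (by omega) hq
  · -- j < j'
    have key : ∀ m, j + 1 ≤ m → m ≤ j' → T (i, j) < T (1, m) := by
      intro m hm1 hm2
      induction m with
      | zero => omega
      | succ m' ih =>
        rcases Nat.lt_or_ge j m' with h | h
        · -- use ih and step from m' to m'+1
          have h1 : T (i, j) < T (1, m') := ih (by omega) (by omega)
          have hcd2 : (2, m') ∈ cd α := mem_cd.mpr ⟨by omega, by omega, by omega,
            part_ge_two hα (by omega) (by omega)⟩
          have h2 : T (1, m') < T (2, m') := row_mono hR (by omega) (by omega) hcd2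
          have h3 := hch m' (by omega) (by omega)
          omega
        · -- base: m' = j
          have hje : m' = j := by omega
          subst hje
          have hcd2 : (2, m') ∈ cd α := mem_cd.mpr ⟨by omega, by omega, by omega,
            part_ge_two hα (by omega) (by omega)⟩
          have h2 : T (i, m') ≤ T (2, m') := by
            rcases Nat.eq_or_lt_of_le hp2 with he2 | hlt2
            · rw [he2]
            · exact le_of_lt (row_mono hR (by omega) (by omega) hcd2)
          have h3 := hch m' (by omega) (by omega)
          omega
    have h1 : T (i, j) < T (1, j') := key j' (by omega) (by omega)
    rcases Nat.eq_or_lt_of_le (show 1 ≤ i' by omega) with he2 | hlt2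
    · rw [← he2]; exact h1
    · have : i' = 2 := by omega
      subst this
      exact lt_trans h1 (row_mono hR (by omega) (by omega) hq)

lemma spine_c_inj {p q : ℕ × ℕ} (hp1 : 1 ≤ p.1) (hp2 : p.1 ≤ 2) (hq1 : 1 ≤ q.1)
    (hq2 : q.1 ≤ 2) (hp3 : 1 ≤ p.2) (hq3 : 1 ≤ q.2)
    (h : 2 * (p.2 - 1) + p.1 = 2 * (q.2 - 1) + q.1) : p = q := by
  obtain ⟨i, j⟩ := p
  obtain ⟨i', j'⟩ := q
  simp only at *
  have : i = i' ∧ j = j' := by omega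
  simp [this.1, this.2]


/-! ### The canonical (greedy) fillings -/

/-- Chain index of a spine box. -/
def cIdx (p : ℕ × ℕ) : ℕ := 2 * (p.2 - 1) + p.1

/-- Tail length of row `r0`. -/
def tl (α : List ℕ) (r0 : ℕ) : ℕ := part α r0 - 2

/-- `indexOf` with a pinned `BEq` instance. -/
def idxOf (l : List (ℕ × ℕ)) (p : ℕ × ℕ) : ℕ :=
  letI : BEq (ℕ × ℕ) := instBEqOfDecidableEq
  l.idxOf p

lemma idxOf_lt_length {l : List (ℕ × ℕ)} {p : ℕ × ℕ} (h : p ∈ l) : idxOf l p < l.length := by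
  unfold idxOf; letI : BEq (ℕ × ℕ) := instBEqOfDecidableEq; exact List.idxOf_lt_length_iff.mpr h

lemma getElem_idxOf {l : List (ℕ × ℕ)} {p : ℕ × ℕ} (h : idxOf l p < l.length) :
    l[idxOf l p] = p := by
  unfold idxOf at h ⊢; letI : BEq (ℕ × ℕ) := instBEqOfDecidableEq; exact List.getElem_idxOf h

lemma idxOf_inj {l : List (ℕ × ℕ)} {p q : ℕ × ℕ} (hp : p ∈ l) (hq : q ∈ l)
    (h : idxOf l p = idxOf l q) : p = q := by
  unfold idxOf at h; letI : BEq (ℕ × ℕ) := instBEqOfDecidableEq; exact (List.idxOf_inj hp).mp h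

lemma idxOf_getElem {l : List (ℕ × ℕ)} (h : l.Nodup) (i : ℕ) (hi : i < l.length) :
    idxOf l (l[i]) = i := by
  unfold idxOf; letI : BEq (ℕ × ℕ) := instBEqOfDecidableEq; exact List.Nodup.idxOf_getElem h i hi

/-- Tail boxes not in row `r0`, in reading order. -/
def otherTails (α : List ℕ) (r0 : ℕ) : List (ℕ × ℕ) :=
  (boxesList α).filter fun p => decide (3 ≤ p.1 ∧ p.2 ≠ r0)

/-- The greedy filling: spine in chain order, the tail of row `r0` inserted directly
after its attachment point, all other tail boxes at the end in reading order. -/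
def G (α : List ℕ) (r0 : ℕ) : ℕ × ℕ → ℕ := fun p =>
  if p ∈ cd α then
    if p.1 ≤ 2 then (if cIdx p ≤ 2 * r0 then cIdx p else cIdx p + tl α r0)
    else if p.2 = r0 then 2 * r0 + (p.1 - 2)
    else sp α + tl α r0 + idxOf (otherTails α r0) p + 1
  else 0

lemma sp_eq_sum_range (α : List ℕ) :
    sp α = ∑ j ∈ Finset.range α.length, min (part α (j + 1)) 2 := by
  rw [sp, ← sum_range_getD α (fun a => min a 2)]
  exact Finset.sum_congr rfl fun j _ => by simp [part]

lemma cIdx_le_sp {n : ℕ} {α : List ℕ} (hα : IsPeakComposition n α) {p : ℕ × ℕ}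
    (hp : p ∈ cd α) (h2 : p.1 ≤ 2) : cIdx p ≤ sp α := by
  obtain ⟨i, j⟩ := p
  rw [mem_cd] at hp
  simp only at hp h2
  rw [sp_eq_sum_range, cIdx]
  simp only
  have hsub : Finset.range j ⊆ Finset.range α.length :=
    Finset.range_subset_range.mpr (by omega)
  have h3 : ∑ m ∈ Finset.range j, min (part α (m + 1)) 2 ≤
      ∑ m ∈ Finset.range α.length, min (part α (m + 1)) 2 :=
    Finset.sum_le_sum_of_subset hsub
  have hj : j = (j - 1) + 1 := by omega
  rw [hj, Finset.sum_range_succ] at h3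
  have h4 : ∀ m ∈ Finset.range (j - 1), min (part α (m + 1)) 2 = 2 := by
    intro m hm
    rw [Finset.mem_range] at hm
    have := part_ge_two hα (j := m + 1) (by omega) (by omega)
    omega
  rw [Finset.sum_congr rfl h4, Finset.sum_const, Finset.card_range] at h3
  have h5 : i ≤ min (part α (j - 1 + 1)) 2 := by
    rw [show j - 1 + 1 = j by omega]
    omega
  rw [smul_eq_mul] at h3
  omega

lemma countP_three {l : List (ℕ × ℕ)} (A B C : ℕ × ℕ → Bool)
    (h : ∀ p ∈ l, (A p = true ∧ B p = false ∧ C p = false) ∨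
      (A p = false ∧ B p = true ∧ C p = false) ∨
      (A p = false ∧ B p = false ∧ C p = true)) :
    l.countP A + l.countP B + l.countP C = l.length := by
  induction l with
  | nil => simp
  | cons x xs ih =>
    have hx := h x List.mem_cons_self
    have ihx := ih fun p hp => h p (List.mem_cons_of_mem x hp)
    simp only [List.countP_cons, List.length_cons]
    rcases hx with ⟨h1, h2, h3⟩ | ⟨h1, h2, h3⟩ | ⟨h1, h2, h3⟩ <;>
      simp [h1, h2, h3] <;> omega

lemma card_split (α : List ℕ) (r0 : ℕ) (hr0 : 1 ≤ r0) :
    α.sum = sp α + tl α r0 + (otherTails α r0).length := by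
  have h := countP_three (l := boxesList α)
    (fun p => decide (p.1 ≤ 2))
    (fun p => decide (3 ≤ p.1 ∧ p.2 = r0))
    (fun p => decide (3 ≤ p.1 ∧ p.2 ≠ r0))
    (by
      intro p hp
      rw [mem_boxesList, mem_cd] at hp
      by_cases h1 : p.1 ≤ 2
      · left
        refine ⟨by simpa using h1, ?_, ?_⟩ <;>
          (simp only [decide_eq_false_iff_not]; omega)
      · by_cases h2 : p.2 = r0
        · right; left
          refine ⟨by simp only [decide_eq_false_iff_not]; omega, ?_, ?_⟩
          · simp only [decide_eq_true_eq]; omega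
          · simp only [decide_eq_false_iff_not]; omega
        · right; right
          refine ⟨by simp only [decide_eq_false_iff_not]; omega, ?_, ?_⟩
          · simp only [decide_eq_false_iff_not]; omega
          · simp only [decide_eq_true_eq]; omega)
  rw [countP_spine, countP_tailrow α r0 hr0, length_boxes] at h
  have e3 : (boxesList α).countP (fun p => decide (3 ≤ p.1 ∧ p.2 ≠ r0))
      = (otherTails α r0).length := by
    rw [otherTails, ← List.countP_eq_length_filter]
  rw [e3] at h
  rw [← h, sp, tl]

lemma mem_otherTails {α : List ℕ} {r0 : ℕ} {p : ℕ × ℕ} :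
    p ∈ otherTails α r0 ↔ p ∈ cd α ∧ 3 ≤ p.1 ∧ p.2 ≠ r0 := by
  rw [otherTails, List.mem_filter, mem_boxesList]
  simp

lemma pairwise_otherTails (α : List ℕ) (r0 : ℕ) : (otherTails α r0).Pairwise Colex :=
  List.Pairwise.sublist List.filter_sublist (pairwise_boxes α)

lemma indexOf_lt_of_colex {l : List (ℕ × ℕ)} (hpw : l.Pairwise Colex) {p q : ℕ × ℕ}
    (hp : p ∈ l) (hq : q ∈ l) (h : Colex p q) : idxOf l p < idxOf l q := by
  have hpl : idxOf l p < l.length := idxOf_lt_length hp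
  have hql : idxOf l q < l.length := idxOf_lt_length hq
  rcases lt_trichotomy (idxOf l p) (idxOf l q) with h' | h' | h'
  · exact h'
  · exfalso
    have : p = q := by
      have e1 : l[idxOf l p] = p := getElem_idxOf hpl
      have e2 : l[idxOf l q] = q := getElem_idxOf hql
      rw [← e1, ← e2]
      congr 1
    subst this
    exact colex_irrefl _ h
  · exfalso
    have h2 := List.pairwise_iff_get.mp hpw ⟨idxOf l q, hql⟩ ⟨idxOf l p, hpl⟩ h'
    simp only [List.get_eq_getElem] at h2
    rw [getElem_idxOf hpl, getElem_idxOf hql] at h2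
    exact colex_asymm h h2

/-! ### Value lemmas for `G` -/

section GLemmas

variable {n : ℕ} {α : List ℕ} (hα : IsPeakComposition n α) {r0 : ℕ}

lemma G_spine {p : ℕ × ℕ} (hp : p ∈ cd α) (h2 : p.1 ≤ 2) :
    G α r0 p = if cIdx p ≤ 2 * r0 then cIdx p else cIdx p + tl α r0 := by
  rw [G, if_pos hp, if_pos h2]

lemma G_tail {p : ℕ × ℕ} (hp : p ∈ cd α) (h3 : 3 ≤ p.1) (hr : p.2 = r0) :
    G α r0 p = 2 * r0 + (p.1 - 2) := by
  rw [G, if_pos hp, if_neg (by omega), if_pos hr]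

lemma G_other {p : ℕ × ℕ} (hp : p ∈ cd α) (h3 : 3 ≤ p.1) (hr : p.2 ≠ r0) :
    G α r0 p = sp α + tl α r0 + idxOf (otherTails α r0) p + 1 := by
  rw [G, if_pos hp, if_neg (by omega), if_neg hr]

include hα in
lemma G_spine_le {p : ℕ × ℕ} (hp : p ∈ cd α) (h2 : p.1 ≤ 2) :
    G α r0 p ≤ sp α + tl α r0 := by
  rw [G_spine hp h2]
  have := cIdx_le_sp hα hp h2
  split_ifs <;> omega

include hα in
lemma two_r0_le_sp {p : ℕ × ℕ} (hp : p ∈ cd α) (h3 : 3 ≤ p.1) (hr : p.2 = r0) :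
    2 * r0 ≤ sp α := by
  have hm := mem_cd.mp hp
  have h2r : (2, r0) ∈ cd α := by
    rw [mem_cd]
    refine ⟨by omega, by omega, by omega, ?_⟩
    show 2 ≤ part α r0
    have : p.1 ≤ part α p.2 := hm.2.2.2
    rw [hr] at this
    omega
  have := cIdx_le_sp hα h2r (by simp [cIdx])
  rw [cIdx] at this
  simp only at this
  have hr1 : 1 ≤ r0 := by
    have := hm.2.1
    omega
  omega

lemma G_tail_bounds {p : ℕ × ℕ} (hp : p ∈ cd α) (h3 : 3 ≤ p.1) (hr : p.2 = r0) :
    2 * r0 < G α r0 p ∧ G α r0 p ≤ 2 * r0 + tl α r0 := by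
  rw [G_tail hp h3 hr]
  have hm := mem_cd.mp hp
  have hle : p.1 ≤ part α r0 := by
    have := hm.2.2.2
    rw [← hr]; exact this
  rw [tl]
  omega

lemma G_other_bounds {p : ℕ × ℕ} (hp : p ∈ cd α) (h3 : 3 ≤ p.1) (hr : p.2 ≠ r0) :
    sp α + tl α r0 < G α r0 p ∧
      G α r0 p ≤ sp α + tl α r0 + (otherTails α r0).length := by
  rw [G_other hp h3 hr]
  have hmem : p ∈ otherTails α r0 := mem_otherTails.mpr ⟨hp, h3, hr⟩
  have := idxOf_lt_length hmem
  omega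

end GLemmas


lemma cd_toFinset (α : List ℕ) : (boxesList α).toFinset = cd α := by
  ext p
  rw [List.mem_toFinset, mem_boxesList]

lemma card_cd (α : List ℕ) : (cd α).card = α.sum := by
  rw [← cd_toFinset, List.toFinset_card_of_nodup (nodup_boxes α), length_boxes]

lemma G_isSPIT {n : ℕ} {α : List ℕ} (hα : IsPeakComposition n α) {r0 : ℕ} (hr0 : 1 ≤ r0) :
    IsSPIT α (G α r0) := by
  have hsplitc := card_split α r0 hr0
  rw [isSPIT_iff hα]
  have hRows : RowsIncrease α (G α r0) := by
    intro i j h1 h2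
    have hm1 := mem_cd.mp h1
    have hm2 := mem_cd.mp h2
    simp only at hm1 hm2
    rcases Nat.lt_or_ge i 2 with hi2 | hi2
    · -- i = 1, both spine
      rw [G_spine h1 (by omega), G_spine h2 (by omega)]
      unfold cIdx
      split_ifs <;> omega
    · rcases Nat.eq_or_lt_of_le hi2 with hi2' | hi3
      · -- i = 2
        by_cases hjr : j = r0
        · rw [G_spine h1 (by omega), G_tail h2 (by omega) hjr]
          unfold cIdx
          split_ifs <;> omega
        · have hb1 := G_spine_le (r0 := r0) hα h1 (by omega)
          have hb2 := (G_other_bounds h2 (by omega) hjr).1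
          omega
      · -- i ≥ 3
        by_cases hjr : j = r0
        · rw [G_tail h1 (by omega) hjr, G_tail h2 (by omega) hjr]
          simp only
          omega
        · rw [G_other h1 (by omega) hjr, G_other h2 (by omega) hjr]
          have hmono := indexOf_lt_of_colex (pairwise_otherTails α r0)
            (mem_otherTails.mpr ⟨h1, by omega, hjr⟩)
            (mem_otherTails.mpr ⟨h2, by omega, hjr⟩)
            (Or.inl (by omega))
          omega
  have hChain : ∀ j, 1 ≤ j → j + 1 ≤ α.length → G α r0 (2, j) < G α r0 (1, j + 1) := by
    intro j hj1 hj2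
    have h1 : (2, j) ∈ cd α := mem_cd.mpr ⟨by omega, by omega, by omega, part_ge_two hα hj1 hj2⟩
    have h2 : (1, j + 1) ∈ cd α := mem_cd.mpr ⟨by omega, by omega, by omega,
      part_pos hα (by omega) (by omega)⟩
    rw [G_spine h1 (by omega), G_spine h2 (by omega)]
    unfold cIdx
    split_ifs <;> omega
  refine ⟨⟨⟨?_, ?_, ?_⟩, ?_⟩, hRows, hChain⟩
  · -- MapsTo
    intro p hp
    rw [Finset.mem_coe] at hp
    have hm := mem_cd.mp hp
    rw [Set.mem_Icc]
    by_cases hp1 : p.1 ≤ 2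
    · have := G_spine_le (r0 := r0) hα hp hp1
      rw [G_spine hp hp1]
      constructor
      · unfold cIdx
        split_ifs <;> omega
      · rw [← G_spine hp hp1]
        omega
    · by_cases hpr : p.2 = r0
      · have hb := G_tail_bounds hp (by omega) hpr
        have h2r := two_r0_le_sp hα hp (by omega) hpr
        omega
      · have hb := G_other_bounds hp (by omega) hpr
        omega
  · -- InjOn
    intro p hp q hq he
    rw [Finset.mem_coe] at hp hq
    have hmp := mem_cd.mp hp
    have hmq := mem_cd.mp hq
    by_cases hp1 : p.1 ≤ 2 <;> by_cases hq1 : q.1 ≤ 2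
    · -- both spine
      have hcij : cIdx p = cIdx q := by
        rw [G_spine hp hp1, G_spine hq hq1] at he
        split_ifs at he <;> omega
      exact spine_c_inj (by omega) hp1 (by omega) hq1 (by omega) (by omega) hcij
    · -- p spine, q not
      exfalso
      by_cases hqr : q.2 = r0
      · have hb := G_tail_bounds hq (by omega) hqr
        have h2r := two_r0_le_sp hα hq (by omega) hqr
        rw [G_spine hp hp1] at he
        have hcs := cIdx_le_sp hα hp hp1
        split_ifs at he <;> omega
      · have hb := G_other_bounds hq (by omega) hqr
        have := G_spine_le (r0 := r0) hα hp hp1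
        omega
    · -- q spine, p not
      exfalso
      by_cases hpr : p.2 = r0
      · have hb := G_tail_bounds hp (by omega) hpr
        have h2r := two_r0_le_sp hα hp (by omega) hpr
        rw [G_spine hq hq1] at he
        have hcs := cIdx_le_sp hα hq hq1
        split_ifs at he <;> omega
      · have hb := G_other_bounds hp (by omega) hpr
        have := G_spine_le (r0 := r0) hα hq hq1
        omega
    · -- both tails
      by_cases hpr : p.2 = r0 <;> by_cases hqr : q.2 = r0
      · rw [G_tail hp (by omega) hpr, G_tail hq (by omega) hqr] at he
        have h1 : p.1 = q.1 := by omega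
        have h2 : p.2 = q.2 := by rw [hpr, hqr]
        exact Prod.ext_iff.mpr ⟨h1, h2⟩
      · exfalso
        have hb := G_tail_bounds hp (by omega) hpr
        have h2r := two_r0_le_sp hα hp (by omega) hpr
        have hb2 := G_other_bounds hq (by omega) hqr
        omega
      · exfalso
        have hb := G_tail_bounds hq (by omega) hqr
        have h2r := two_r0_le_sp hα hq (by omega) hqr
        have hb2 := G_other_bounds hp (by omega) hpr
        omega
      · rw [G_other hp (by omega) hpr, G_other hq (by omega) hqr] at he
        have hidx : idxOf (otherTails α r0) p = idxOf (otherTails α r0) q := by omega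
        exact idxOf_inj (mem_otherTails.mpr ⟨hp, by omega, hpr⟩)
          (mem_otherTails.mpr ⟨hq, by omega, hqr⟩) hidx
  · -- SurjOn
    have hMaps : ∀ p ∈ cd α, G α r0 p ∈ Finset.Icc 1 α.sum := by
      intro p hp
      rw [Finset.mem_Icc]
      have hm := mem_cd.mp hp
      by_cases hp1 : p.1 ≤ 2
      · have := G_spine_le (r0 := r0) hα hp hp1
        rw [G_spine hp hp1]
        constructor
        · unfold cIdx; split_ifs <;> omega
        · rw [← G_spine hp hp1]; omega
      · by_cases hpr : p.2 = r0
        · have hb := G_tail_bounds hp (by omega) hpr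
          have h2r := two_r0_le_sp hα hp (by omega) hpr
          omega
        · have hb := G_other_bounds hp (by omega) hpr
          omega
    have hInj : Set.InjOn (G α r0) (cd α : Set (ℕ × ℕ)) := by
      intro p hp q hq he
      rw [Finset.mem_coe] at hp hq
      have hmp := mem_cd.mp hp
      have hmq := mem_cd.mp hq
      by_cases hp1 : p.1 ≤ 2 <;> by_cases hq1 : q.1 ≤ 2
      · have hcij : cIdx p = cIdx q := by
          rw [G_spine hp hp1, G_spine hq hq1] at he
          split_ifs at he <;> omega
        exact spine_c_inj (by omega) hp1 (by omega) hq1 (by omega) (by omega) hcij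
      · exfalso
        by_cases hqr : q.2 = r0
        · have hb := G_tail_bounds hq (by omega) hqr
          have h2r := two_r0_le_sp hα hq (by omega) hqr
          rw [G_spine hp hp1] at he
          have hcs := cIdx_le_sp hα hp hp1
          split_ifs at he <;> omega
        · have hb := G_other_bounds hq (by omega) hqr
          have := G_spine_le (r0 := r0) hα hp hp1
          omega
      · exfalso
        by_cases hpr : p.2 = r0
        · have hb := G_tail_bounds hp (by omega) hpr
          have h2r := two_r0_le_sp hα hp (by omega) hpr
          rw [G_spine hq hq1] at he
          have hcs := cIdx_le_sp hα hq hq1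
          split_ifs at he <;> omega
        · have hb := G_other_bounds hp (by omega) hpr
          have := G_spine_le (r0 := r0) hα hq hq1
          omega
      · by_cases hpr : p.2 = r0 <;> by_cases hqr : q.2 = r0
        · rw [G_tail hp (by omega) hpr, G_tail hq (by omega) hqr] at he
          exact Prod.ext_iff.mpr ⟨by omega, by rw [hpr, hqr]⟩
        · exfalso
          have hb := G_tail_bounds hp (by omega) hpr
          have h2r := two_r0_le_sp hα hp (by omega) hpr
          have hb2 := G_other_bounds hq (by omega) hqr
          omega
        · exfalso
          have hb := G_tail_bounds hq (by omega) hqr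
          have h2r := two_r0_le_sp hα hq (by omega) hqr
          have hb2 := G_other_bounds hp (by omega) hpr
          omega
        · rw [G_other hp (by omega) hpr, G_other hq (by omega) hqr] at he
          exact idxOf_inj (mem_otherTails.mpr ⟨hp, by omega, hpr⟩)
            (mem_otherTails.mpr ⟨hq, by omega, hqr⟩) (by omega)
    have himg : (cd α).image (G α r0) ⊆ Finset.Icc 1 α.sum := by
      intro y hy
      rw [Finset.mem_image] at hy
      obtain ⟨p, hp, rfl⟩ := hy
      exact hMaps p hp
    have hcard1 : ((cd α).image (G α r0)).card = α.sum := by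
      rw [Finset.card_image_of_injOn hInj, card_cd]
    have heq : (cd α).image (G α r0) = Finset.Icc 1 α.sum := by
      refine Finset.eq_of_subset_of_card_le himg ?_
      rw [hcard1, Nat.card_Icc]
      omega
    intro y hy
    rw [Set.mem_Icc] at hy
    have : y ∈ Finset.Icc 1 α.sum := Finset.mem_Icc.mpr hy
    rw [← heq, Finset.mem_image] at this
    obtain ⟨p, hp, hpv⟩ := this
    exact ⟨p, Finset.mem_coe.mpr hp, hpv⟩
  · -- off diagram
    intro p hp
    rw [G, if_neg hp]


/-! ### Bridge between `InvW` of reading words and box comparisons -/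

def boxAt (α : List ℕ) (k : ℕ) : ℕ × ℕ := (boxesList α).getD k (0, 0)

lemma boxAt_mem {α : List ℕ} {k : ℕ} (hk : k < α.sum) : boxAt α k ∈ cd α := by
  have hk' : k < (boxesList α).length := by rw [length_boxes]; omega
  rw [boxAt, List.getD_eq_getElem _ _ hk', ← mem_boxesList]
  exact List.getElem_mem hk'

lemma boxAt_idxOf {α : List ℕ} {p : ℕ × ℕ} (hp : p ∈ cd α) :
    boxAt α (idxOf (boxesList α) p) = p := by
  have hmem : p ∈ boxesList α := mem_boxesList.mpr hp
  have h1 : idxOf (boxesList α) p < (boxesList α).length := idxOf_lt_length hmem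
  rw [boxAt, List.getD_eq_getElem _ _ h1]
  exact getElem_idxOf h1

lemma idxOf_lt_sum {α : List ℕ} {p : ℕ × ℕ} (hp : p ∈ cd α) :
    idxOf (boxesList α) p < α.sum := by
  have := idxOf_lt_length (mem_boxesList.mpr hp)
  rw [length_boxes] at this
  exact this

lemma boxAt_colex {α : List ℕ} {k l : ℕ} (hk : k < α.sum) (hl : l < α.sum) (hkl : k < l) :
    Colex (boxAt α k) (boxAt α l) := by
  have hk' : k < (boxesList α).length := by rw [length_boxes]; omega
  have hl' : l < (boxesList α).length := by rw [length_boxes]; omega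
  rw [boxAt, boxAt, List.getD_eq_getElem _ _ hk', List.getD_eq_getElem _ _ hl']
  exact colex_of_lt hk' hl' hkl

lemma idxOf_lt_idxOf_boxes {α : List ℕ} {p q : ℕ × ℕ} (hp : p ∈ cd α) (hq : q ∈ cd α)
    (h : Colex p q) : idxOf (boxesList α) p < idxOf (boxesList α) q :=
  indexOf_lt_of_colex (pairwise_boxes α) (mem_boxesList.mpr hp) (mem_boxesList.mpr hq) h

lemma wC_length (α : List ℕ) (T : ℕ × ℕ → ℕ) : (wC α T).length = α.sum := by
  rw [wC_eq_map, List.length_map, length_boxes]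

lemma wC_getD {α : List ℕ} {T : ℕ × ℕ → ℕ} {k : ℕ} (hk : k < α.sum) :
    (wC α T).getD k 0 = T (boxAt α k) := by
  have hk' : k < (boxesList α).length := by rw [length_boxes]; omega
  rw [wC_eq_map, List.getD_eq_getElem _ _ (by rw [List.length_map]; exact hk'),
    List.getElem_map, boxAt, List.getD_eq_getElem _ _ hk']

lemma mem_invW_wC {α : List ℕ} (T : ℕ × ℕ → ℕ) {a b : ℕ} :
    (a, b) ∈ InvW (wC α T) ↔
      1 ≤ a ∧ a < b ∧ b ≤ α.sum ∧ T (boxAt α (b - 1)) < T (boxAt α (a - 1)) := by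
  simp only [InvW, Set.mem_setOf_eq, wC_length]
  constructor
  · rintro ⟨h1, h2, h3, h4⟩
    rw [wC_getD (by omega), wC_getD (by omega)] at h4
    exact ⟨h1, h2, h3, h4⟩
  · rintro ⟨h1, h2, h3, h4⟩
    rw [← wC_getD (T := T) (by omega : b - 1 < α.sum),
      ← wC_getD (T := T) (by omega : a - 1 < α.sum)] at h4
    exact ⟨h1, h2, h3, h4⟩

/-- The filling read off from a word. -/
def Tof (α : List ℕ) (w : List ℕ) : ℕ × ℕ → ℕ := fun p =>
  if p ∈ cd α then w.getD (idxOf (boxesList α) p) 0 else 0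

lemma wC_Tof {α : List ℕ} {w : List ℕ} (hw : w.length = α.sum) : wC α (Tof α w) = w := by
  rw [wC_eq_map]
  refine List.ext_getElem (by rw [List.length_map, length_boxes, hw]) fun k hk1 hk2 => ?_
  rw [List.getElem_map]
  have hk' : k < (boxesList α).length := by rw [List.length_map] at hk1; exact hk1
  have hmem : (boxesList α)[k] ∈ cd α := mem_boxesList.mp (List.getElem_mem hk')
  rw [Tof, if_pos hmem, idxOf_getElem (nodup_boxes α) k hk']
  exact List.getD_eq_getElem w 0 hk2

lemma permWord_length {n : ℕ} {w : List ℕ} (hw : IsPermWord n w) : w.length = n := by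
  rw [hw.length_eq, List.length_range']

lemma permWord_nodup {n : ℕ} {w : List ℕ} (hw : IsPermWord n w) : w.Nodup :=
  hw.nodup_iff.mpr (List.nodup_range')

lemma permWord_mem {n : ℕ} {w : List ℕ} (hw : IsPermWord n w) {x : ℕ} :
    x ∈ w ↔ (1 ≤ x ∧ x ≤ n) := by
  rw [hw.mem_iff, List.mem_range']
  constructor
  · rintro ⟨i, hi, rfl⟩; omega
  · intro h; exact ⟨x - 1, by omega, by omega⟩

lemma Tof_standard {α : List ℕ} {w : List ℕ} (hw : IsPermWord α.sum w) :
    IsStandardFilling α (Tof α w) := by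
  have hlen := permWord_length hw
  have hnd := permWord_nodup hw
  refine ⟨⟨?_, ?_, ?_⟩, fun p hp => by rw [Tof, if_neg hp]⟩
  · intro p hp
    rw [Finset.mem_coe] at hp
    rw [Set.mem_Icc, Tof, if_pos hp]
    have hidx : idxOf (boxesList α) p < w.length := by
      rw [hlen]; exact idxOf_lt_sum hp
    rw [List.getD_eq_getElem _ _ hidx]
    exact (permWord_mem hw).mp (List.getElem_mem hidx)
  · intro p hp q hq he
    rw [Finset.mem_coe] at hp hq
    simp only [Tof] at he
    rw [if_pos hp, if_pos hq] at he
    have hip : idxOf (boxesList α) p < w.length := by rw [hlen]; exact idxOf_lt_sum hp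
    have hiq : idxOf (boxesList α) q < w.length := by rw [hlen]; exact idxOf_lt_sum hq
    rw [List.getD_eq_getElem _ _ hip, List.getD_eq_getElem _ _ hiq] at he
    have := (hnd.getElem_inj_iff).mp he
    exact idxOf_inj (mem_boxesList.mpr hp) (mem_boxesList.mpr hq) this
  · intro y hy
    rw [Set.mem_Icc] at hy
    have : y ∈ w := (permWord_mem hw).mpr hy
    rw [List.mem_iff_getElem] at this
    obtain ⟨k, hk, hky⟩ := this
    have hk' : k < α.sum := by rw [← hlen]; exact hk
    refine ⟨boxAt α k, Finset.mem_coe.mpr (boxAt_mem hk'), ?_⟩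
    rw [Tof, if_pos (boxAt_mem hk')]
    have : idxOf (boxesList α) (boxAt α k) = k := by
      have hk'' : k < (boxesList α).length := by rw [length_boxes]; exact hk'
      rw [boxAt, List.getD_eq_getElem _ _ hk'']
      exact idxOf_getElem (nodup_boxes α) k hk''
    rw [this, List.getD_eq_getElem _ _ hk]
    exact hky


/-! ### Inclusion lemmas for the backward direction -/

lemma tl_top (α : List ℕ) : tl α (α.length + 1) = 0 := by
  rw [tl, part, List.getD_eq_default]
  omega

lemma Gσ_spine_eq {α : List ℕ} {p : ℕ × ℕ} (hp : p ∈ cd α) (h2 : p.1 ≤ 2) :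
    G α (α.length + 1) p = cIdx p := by
  rw [G_spine hp h2, if_pos]
  have hm := mem_cd.mp hp
  rw [cIdx]
  omega

/-- In a SPIT, a spine box whose chain index is at most the attachment point of a tail
box is smaller than the tail box. -/
lemma spit_spine_lt_tail {n : ℕ} {α : List ℕ} (hα : IsPeakComposition n α) {T : ℕ × ℕ → ℕ}
    (hT : IsSPIT α T) {p q : ℕ × ℕ} (hp : p ∈ cd α) (hq : q ∈ cd α)
    (hp1 : p.1 ≤ 2) (hq3 : 3 ≤ q.1) (hcip : cIdx p ≤ 2 * q.2) : T p < T q := by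
  obtain ⟨hSF, hR, hch⟩ := (isSPIT_iff hα T).mp hT
  have hmq := mem_cd.mp hq
  have hmp := mem_cd.mp hp
  have h2q : (2, q.2) ∈ cd α := mem_cd.mpr ⟨by omega, by omega, by omega,
    by show 2 ≤ part α q.2; omega⟩
  have hrow : T (2, q.2) < T q := by
    have := row_mono hR (i := 2) (i' := q.1) (by omega) (by omega)
      (show ((q.1 : ℕ), q.2) ∈ cd α from hq)
    exact this
  rcases Nat.eq_or_lt_of_le hcip with he | hlt
  · have : p = (2, q.2) := spine_c_inj (by omega) hp1 (by omega) (by omega) (by omega)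
      (by omega) (by simp only [cIdx] at he ⊢; omega)
    rw [this]
    exact hrow
  · have := spine_mono hα hR hch hp h2q hp1 (by omega)
      (by simp only [cIdx] at hlt ⊢; omega)
    omega

lemma inclA {n : ℕ} {α : List ℕ} (hα : IsPeakComposition n α) {T : ℕ × ℕ → ℕ}
    (hT : IsSPIT α T) :
    InvW (wC α (G α (α.length + 1))) ⊆ InvW (wC α T) := by
  obtain ⟨hSF, hR, hch⟩ := (isSPIT_iff hα T).mp hT
  rintro ⟨a, b⟩ hmem
  rw [mem_invW_wC] at hmem ⊢
  obtain ⟨h1, h2, h3, h4⟩ := hmem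
  set p := boxAt α (a - 1) with hpdef
  set q := boxAt α (b - 1) with hqdef
  have hp : p ∈ cd α := boxAt_mem (by omega)
  have hq : q ∈ cd α := boxAt_mem (by omega)
  have hcx : Colex p q := boxAt_colex (by omega) (by omega) (by omega)
  refine ⟨h1, h2, h3, ?_⟩
  have hmp := mem_cd.mp hp
  have hmq := mem_cd.mp hq
  by_cases hq1 : q.1 ≤ 2
  · have hp1 : p.1 ≤ 2 := by
      rcases hcx with h | ⟨h, _⟩ <;> omega
    rw [Gσ_spine_eq hp hp1, Gσ_spine_eq hq hq1] at h4
    exact spine_mono hα hR hch hq hp hq1 hp1 h4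
  · exfalso
    have hb := G_other_bounds (r0 := α.length + 1) hq (by omega) (by omega)
    have htl := tl_top α
    by_cases hp1 : p.1 ≤ 2
    · have h5 := Gσ_spine_eq hp hp1
      have h6 := cIdx_le_sp hα hp hp1
      omega
    · have hbp := G_other_bounds (r0 := α.length + 1) hp (by omega) (by omega)
      rw [G_other (r0 := α.length + 1) hp (by omega) (by omega),
        G_other (r0 := α.length + 1) hq (by omega) (by omega)] at h4
      have hmono := indexOf_lt_of_colex (pairwise_otherTails α (α.length + 1))
        (mem_otherTails.mpr ⟨hp, by omega, by omega⟩)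
        (mem_otherTails.mpr ⟨hq, by omega, by omega⟩) hcx
      omega

lemma inclB {n : ℕ} {α : List ℕ} (hα : IsPeakComposition n α) {R : ℕ} (hR1 : 1 ≤ R)
    (hRbig : ∀ j, 1 ≤ j → j ≤ α.length → 2 < part α j → j = R)
    {T : ℕ × ℕ → ℕ} (hT : IsSPIT α T) :
    InvW (wC α T) ⊆ InvW (wC α (G α R)) := by
  obtain ⟨hSF, hR, hch⟩ := (isSPIT_iff hα T).mp hT
  rintro ⟨a, b⟩ hmem
  rw [mem_invW_wC] at hmem ⊢
  obtain ⟨h1, h2, h3, h4⟩ := hmem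
  set p := boxAt α (a - 1) with hpdef
  set q := boxAt α (b - 1) with hqdef
  have hp : p ∈ cd α := boxAt_mem (by omega)
  have hq : q ∈ cd α := boxAt_mem (by omega)
  have hcx : Colex p q := boxAt_colex (by omega) (by omega) (by omega)
  refine ⟨h1, h2, h3, ?_⟩
  have hmp := mem_cd.mp hp
  have hmq := mem_cd.mp hq
  by_cases hp1 : p.1 ≤ 2 <;> by_cases hq1 : q.1 ≤ 2
  · -- both spine
    have hlt : cIdx q < cIdx p := by
      rcases lt_trichotomy (cIdx p) (cIdx q) with h | h | h
      · exfalso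
        have := spine_mono hα hR hch hp hq hp1 hq1 h
        omega
      · exfalso
        have : p = q := spine_c_inj (by omega) hp1 (by omega) hq1 (by omega) (by omega) h
        rw [this] at h4
        omega
      · exact h
    rw [G_spine hp hp1, G_spine hq hq1]
    split_ifs <;> omega
  · -- p spine, q tail (row R)
    have hqR : q.2 = R := hRbig q.2 (by omega) (by omega) (by omega)
    have hcip : 2 * R < cIdx p := by
      by_contra hcon
      have := spit_spine_lt_tail hα hT hp hq hp1 (by omega) (by rw [hqR]; omega)
      omega
    rw [G_spine hp hp1, if_neg (by omega)]
    have hb := G_tail_bounds (r0 := R) hq (by omega) hqR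
    omega
  · -- p tail, q spine: impossible reading order
    exfalso
    rcases hcx with h | ⟨h, _⟩ <;> omega
  · -- both tails, same row R
    exfalso
    have hpR : p.2 = R := hRbig p.2 (by omega) (by omega) (by omega)
    have hqR : q.2 = R := hRbig q.2 (by omega) (by omega) (by omega)
    have hpq1 : p.1 < q.1 := by
      rcases hcx with h | ⟨h, h'⟩
      · exact h
      · omega
    have hTT : T p < T q := by
      have h5 := row_mono hR (i := p.1) (i' := q.1) (by omega) hpq1
        (show ((q.1 : ℕ), q.2) ∈ cd α from hq)
      have hpq : ((p.1 : ℕ), q.2) = p := by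
        rw [hqR, ← hpR]
      rw [hpq] at h5
      exact h5
    omega


lemma countP_ge_two {l : List ℕ} {P : ℕ → Bool} {i j : ℕ} (hij : i < j) (hj : j < l.length)
    (hPi : P (l.getD i 0) = true) (hPj : P (l.getD j 0) = true) : 2 ≤ l.countP P := by
  induction l generalizing i j with
  | nil => simp at hj
  | cons x xs ih =>
    rw [List.length_cons] at hj
    rw [List.countP_cons]
    have hgj : (x :: xs).getD j 0 = xs.getD (j - 1) 0 := by
      rcases j with _ | j'
      · exact absurd hij (by omega)
      · simp [List.getD_cons_succ]
    rcases Nat.eq_zero_or_pos i with hi0 | hipos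
    · subst hi0
      rw [List.getD_cons_zero] at hPi
      have hj1 : j - 1 < xs.length := by omega
      rw [hgj] at hPj
      have hmem : xs.getD (j - 1) 0 ∈ xs := by
        rw [List.getD_eq_getElem _ _ hj1]
        exact List.getElem_mem hj1
      have hpos : 0 < xs.countP P := List.countP_pos_iff.mpr ⟨_, hmem, hPj⟩
      rw [hPi]
      norm_num
      omega
    · have hgi : (x :: xs).getD i 0 = xs.getD (i - 1) 0 := by
        rcases i with _ | i'
        · exact absurd hipos (by omega)
        · simp [List.getD_cons_succ]
      rw [hgi] at hPi
      rw [hgj] at hPj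
      have := ih (i := i - 1) (j := j - 1) (by omega) (by omega) hPi hPj
      omega

lemma backward {n : ℕ} {α : List ℕ} (hα : IsPeakComposition n α)
    (hcount : α.countP (fun a => decide (2 < a)) ≤ 1) :
    ∃ σ ρ : List ℕ, IsPermWord n σ ∧ IsPermWord n ρ ∧ InvW σ ⊆ InvW ρ ∧
      RWc α = {w : List ℕ | IsPermWord n w ∧ InvW σ ⊆ InvW w ∧ InvW w ⊆ InvW ρ} := by
  have hn : α.sum = n := hα.1.2
  obtain ⟨R, hR1, hRbig⟩ : ∃ R, 1 ≤ R ∧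
      ∀ j, 1 ≤ j → j ≤ α.length → 2 < part α j → j = R := by
    by_cases hex : ∃ j, 1 ≤ j ∧ j ≤ α.length ∧ 2 < part α j
    · obtain ⟨j0, hj01, hj02, hj03⟩ := hex
      refine ⟨j0, hj01, fun j hj1 hj2 hjbig => ?_⟩
      by_contra hne
      have hbig1 : (fun a => decide (2 < a)) (α.getD (j - 1) 0) = true :=
        decide_eq_true hjbig
      have hbig2 : (fun a => decide (2 < a)) (α.getD (j0 - 1) 0) = true :=
        decide_eq_true hj03
      have h2 : 2 ≤ α.countP (fun a => decide (2 < a)) := by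
        rcases Nat.lt_or_ge (j - 1) (j0 - 1) with h | h
        · exact countP_ge_two h (by omega) hbig1 hbig2
        · have h' : j0 - 1 < j - 1 := by omega
          exact countP_ge_two h' (by omega) hbig2 hbig1
      omega
    · exact ⟨α.length + 1, by omega,
        fun j hj1 hj2 hjbig => absurd ⟨j, hj1, hj2, hjbig⟩ hex⟩
  have hTσ : IsSPIT α (G α (α.length + 1)) := G_isSPIT hα (by omega)
  have hTρ : IsSPIT α (G α R) := G_isSPIT hα hR1
  refine ⟨wC α (G α (α.length + 1)), wC α (G α R), ?_, ?_, ?_, ?_⟩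
  · rw [← hn]; exact wC_permWord hTσ.1.1
  · rw [← hn]; exact wC_permWord hTρ.1.1
  · exact inclA hα hTρ
  · ext w
    simp only [RWc, SPITset, Set.mem_setOf_eq]
    constructor
    · rintro ⟨T, hT, rfl⟩
      exact ⟨by rw [← hn]; exact wC_permWord hT.1.1, inclA hα hT, inclB hα hR1 hRbig hT⟩
    · rintro ⟨hwperm, hs, hr⟩
      have hwN : IsPermWord α.sum w := by rw [hn]; exact hwperm
      have hlen : w.length = α.sum := permWord_length hwN
      have hstd := Tof_standard hwN
      have hwc : wC α (Tof α w) = w := wC_Tof hlen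
      have hSPIT : IsSPIT α (Tof α w) := by
        rw [isSPIT_iff hα]
        refine ⟨hstd, ?_, ?_⟩
        · -- rows increase
          intro i j hb1 hb2
          have hm1 := mem_cd.mp hb1
          have hm2 := mem_cd.mp hb2
          have hne : Tof α w (i, j) ≠ Tof α w (i + 1, j) := by
            intro he
            have h5 := hstd.1.2.1 (Finset.mem_coe.mpr hb1) (Finset.mem_coe.mpr hb2) he
            simp only [Prod.mk.injEq] at h5
            omega
          rcases lt_or_gt_of_ne hne with h | h
          · exact h
          · exfalso
            have hkl : idxOf (boxesList α) (i, j) < idxOf (boxesList α) (i + 1, j) :=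
              idxOf_lt_idxOf_boxes hb1 hb2 (Or.inl (by omega))
            have hmem : (idxOf (boxesList α) (i, j) + 1, idxOf (boxesList α) (i + 1, j) + 1)
                ∈ InvW (wC α (Tof α w)) := by
              rw [mem_invW_wC]
              refine ⟨by omega, by omega, by have := idxOf_lt_sum hb2; omega, ?_⟩
              simp only [Nat.add_sub_cancel]
              rw [boxAt_idxOf hb1, boxAt_idxOf hb2]
              exact h
            rw [hwc] at hmem
            have hρ := hr hmem
            rw [mem_invW_wC] at hρ
            have hTT := hρ.2.2.2
            simp only [Nat.add_sub_cancel] at hTT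
            rw [boxAt_idxOf hb1, boxAt_idxOf hb2] at hTT
            -- now derive G α R (i, j) < G α R (i+1, j), contradiction
            rcases Nat.lt_or_ge i 2 with hi2 | hi2
            · rw [G_spine hb1 (by omega), G_spine hb2 (by omega)] at hTT
              unfold cIdx at hTT
              split_ifs at hTT <;> omega
            · have hjR : j = R := hRbig j (by omega) (by omega) (by
                have : i + 1 ≤ part α j := hm2.2.2.2
                omega)
              rcases Nat.eq_or_lt_of_le hi2 with hi2' | hi3
              · -- i = 2
                have hbnd := (G_tail_bounds (r0 := R) hb2 (by omega) hjR).1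
                rw [G_spine hb1 (by omega), if_pos (by simp only [cIdx]; omega)] at hTT
                simp only [cIdx] at hTT
                omega
              · rw [G_tail hb1 (by omega) hjR, G_tail hb2 (by omega) hjR] at hTT
                simp only at hTT
                omega
        · -- chain
          intro j hj1 hj2
          have hq2 : (2, j) ∈ cd α := mem_cd.mpr ⟨by omega, by omega, by omega,
            part_ge_two hα hj1 hj2⟩
          have hp1 : (1, j + 1) ∈ cd α := mem_cd.mpr ⟨by omega, by omega, by omega,
            part_pos hα (by omega) (by omega)⟩
          have hkl : idxOf (boxesList α) (1, j + 1) < idxOf (boxesList α) (2, j) :=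
            idxOf_lt_idxOf_boxes hp1 hq2 (Or.inl (by omega))
          have hmemσ : (idxOf (boxesList α) (1, j + 1) + 1, idxOf (boxesList α) (2, j) + 1)
              ∈ InvW (wC α (G α (α.length + 1))) := by
            rw [mem_invW_wC]
            refine ⟨by omega, by omega, by have := idxOf_lt_sum hq2; omega, ?_⟩
            simp only [Nat.add_sub_cancel]
            rw [boxAt_idxOf hp1, boxAt_idxOf hq2]
            rw [Gσ_spine_eq hq2 (by omega), Gσ_spine_eq hp1 (by omega)]
            simp only [cIdx]
            omega
          have hw := hs hmemσ
          rw [← hwc, mem_invW_wC] at hw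
          have hTT := hw.2.2.2
          simp only [Nat.add_sub_cancel] at hTT
          rw [boxAt_idxOf hp1, boxAt_idxOf hq2] at hTT
          exact hTT
      exact ⟨Tof α w, hSPIT, hwc.symm⟩


lemma exists_two_of_countP {l : List ℕ} {P : ℕ → Bool} (h : 2 ≤ l.countP P) :
    ∃ i j, i < j ∧ j < l.length ∧ P (l.getD i 0) = true ∧ P (l.getD j 0) = true := by
  induction l with
  | nil => simp at h
  | cons x xs ih =>
    rw [List.countP_cons] at h
    cases hx : P x with
    | true =>
      have h1 : 0 < xs.countP P := by
        by_contra hc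
        push_neg at hc
        have h0 : xs.countP P = 0 := by omega
        rw [h0, hx] at h
        simp at h
      obtain ⟨a, ha, hPa⟩ := List.countP_pos_iff.mp h1
      obtain ⟨m, hm, hma⟩ := List.mem_iff_getElem.mp ha
      refine ⟨0, m + 1, by omega, by simp only [List.length_cons]; omega, ?_, ?_⟩
      · rw [List.getD_cons_zero]; exact hx
      · rw [List.getD_cons_succ, List.getD_eq_getElem _ _ hm, hma]; exact hPa
    | false =>
      have h2 : 2 ≤ xs.countP P := by
        rw [hx] at h
        simpa using h
      obtain ⟨i, j, hij, hjl, hPi, hPj⟩ := ih h2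
      exact ⟨i + 1, j + 1, by omega, by simp only [List.length_cons]; omega,
        by rw [List.getD_cons_succ]; exact hPi, by rw [List.getD_cons_succ]; exact hPj⟩

lemma forward {n : ℕ} {α : List ℕ} (hα : IsPeakComposition n α)
    (hcount : 2 ≤ α.countP (fun a => decide (2 < a)))
    (hint : ∃ σ ρ : List ℕ, IsPermWord n σ ∧ IsPermWord n ρ ∧ InvW σ ⊆ InvW ρ ∧
        RWc α = {w : List ℕ | IsPermWord n w ∧ InvW σ ⊆ InvW w ∧ InvW w ⊆ InvW ρ}) :
    False := by
  obtain ⟨σ, ρ, hσp, hρp, hσρ, heq⟩ := hint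
  obtain ⟨i1, i2, hi12, hi2len, hP1, hP2⟩ := exists_two_of_countP hcount
  have hpr : 2 < part α (i1 + 1) := by
    have := of_decide_eq_true hP1
    simpa [part] using this
  have hpr' : 2 < part α (i2 + 1) := by
    have := of_decide_eq_true hP2
    simpa [part] using this
  set r := i1 + 1 with hrdef
  set r' := i2 + 1 with hr'def
  have hrr' : r < r' := by omega
  have hr'len : r' ≤ α.length := by omega
  have hu : (3, r) ∈ cd α := mem_cd.mpr ⟨by omega, by omega, by omega,
    by show 3 ≤ part α r; omega⟩
  have hv : (3, r') ∈ cd α := mem_cd.mpr ⟨by omega, by omega, by omega,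
    by show 3 ≤ part α r'; omega⟩
  have hz : (1, r + 1) ∈ cd α := mem_cd.mpr ⟨by omega, by omega, by omega,
    part_pos hα (by omega) (by omega)⟩
  have h2r' : (2, r') ∈ cd α := mem_cd.mpr ⟨by omega, by omega, by omega,
    by show 2 ≤ part α r'; omega⟩
  -- ρ is the reading word of some SPIT
  have hρmem : ρ ∈ RWc α := by
    rw [heq]
    exact ⟨hρp, hσρ, subset_refl _⟩
  obtain ⟨Tρ, hTρ, hρeq⟩ := hρmem
  -- the two test SPITs
  have h1' : IsSPIT α (G α r') := G_isSPIT hα (by omega)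
  have h2' : IsSPIT α (G α r) := G_isSPIT hα (by omega)
  have hsub1 : InvW (wC α (G α r')) ⊆ InvW ρ := by
    have hw1 : wC α (G α r') ∈ RWc α := ⟨G α r', h1', rfl⟩
    rw [heq] at hw1
    exact hw1.2.2
  have hsub2 : InvW (wC α (G α r)) ⊆ InvW ρ := by
    have hw2 : wC α (G α r) ∈ RWc α := ⟨G α r, h2', rfl⟩
    rw [heq] at hw2
    exact hw2.2.2
  -- pair A : u before v, G α r' has an inversion there
  have hkuv : idxOf (boxesList α) (3, r) < idxOf (boxesList α) (3, r') :=
    idxOf_lt_idxOf_boxes hu hv (Or.inr ⟨rfl, by omega⟩)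
  have hkzu : idxOf (boxesList α) (1, r + 1) < idxOf (boxesList α) (3, r) :=
    idxOf_lt_idxOf_boxes hz hu (Or.inl (by omega))
  have hA : (idxOf (boxesList α) (3, r) + 1, idxOf (boxesList α) (3, r') + 1)
      ∈ InvW (wC α (G α r')) := by
    rw [mem_invW_wC]
    refine ⟨by omega, by omega, by have := idxOf_lt_sum hv; omega, ?_⟩
    simp only [Nat.add_sub_cancel]
    rw [boxAt_idxOf hu, boxAt_idxOf hv]
    rw [G_tail hv (by omega) rfl]
    have hb := (G_other_bounds (r0 := r') hu (by omega) (by omega)).1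
    have hsp := two_r0_le_sp (r0 := r') hα hv (by omega) rfl
    have htl : 1 ≤ tl α r' := by rw [tl]; omega
    simp only
    omega
  have hC : (idxOf (boxesList α) (1, r + 1) + 1, idxOf (boxesList α) (3, r) + 1)
      ∈ InvW (wC α (G α r)) := by
    rw [mem_invW_wC]
    refine ⟨by omega, by omega, by have := idxOf_lt_sum hu; omega, ?_⟩
    simp only [Nat.add_sub_cancel]
    rw [boxAt_idxOf hz, boxAt_idxOf hu]
    rw [G_tail hu (by omega) rfl, G_spine hz (by omega),
      if_neg (by simp only [cIdx]; omega)]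
    have htl : 1 ≤ tl α r := by rw [tl]; omega
    simp only [cIdx]
    omega
  -- transfer to Tρ
  have hAρ := hsub1 hA
  have hCρ := hsub2 hC
  rw [hρeq, mem_invW_wC] at hAρ hCρ
  have hTT1 := hAρ.2.2.2
  have hTT2 := hCρ.2.2.2
  simp only [Nat.add_sub_cancel] at hTT1 hTT2
  rw [boxAt_idxOf hu, boxAt_idxOf hv] at hTT1
  rw [boxAt_idxOf hz, boxAt_idxOf hu] at hTT2
  -- contradiction with the SPIT structure of Tρ
  have hTρ' : IsSPIT α Tρ := hTρ
  obtain ⟨hSF, hRws, hch⟩ := (isSPIT_iff hα Tρ).mp hTρ'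
  have e1 : Tρ (1, r + 1) < Tρ (2, r') :=
    spine_mono hα hRws hch hz h2r' (by omega) (by omega)
      (by simp only [cIdx]; omega)
  have e2 : Tρ (2, r') < Tρ (3, r') := row_mono hRws (by omega) (by omega) hv
  omega

/-- For a peak composition `α` of `n`, the set of column reading words of
SPITs of shape `α` is a left weak Bruhat interval in `S_n` iff `α` has at most one part
greater than `2`. -/
theorem RWc_interval_iff (n : ℕ) (α : List ℕ) (hα : IsPeakComposition n α) :
    (∃ σ ρ : List ℕ, IsPermWord n σ ∧ IsPermWord n ρ ∧ InvW σ ⊆ InvW ρ ∧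
        RWc α = {w : List ℕ | IsPermWord n w ∧ InvW σ ⊆ InvW w ∧ InvW w ⊆ InvW ρ}) ↔
      α.countP (fun a => decide (2 < a)) ≤ 1 := by
  constructor
  · intro hint
    by_contra hc
    push_neg at hc
    exact forward hα (by omega) hint
  · exact backward hα

end PaperSPIT
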